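/- For the cost c(x,y) = e^{x₁+y₁}cos(x₂-y₂) + e^{2x₁}/2 + e^{2y₁}/2 on ℝ² × ℝ², the mixed second derivative matrix satisfies det D²ₓᵧc(x,y) = e^{2(x₁+y₁)} > 0 for all (x,y), yet the map y ↦ Dₓc(x,y) is not injective for any fixed x. -/

import Mathlib

/-- The cost `c(x,y) = e^{x₁+y₁} cos(x₂-y₂) + e^{2x₁}/2 + e^{2y₁}/2` on `ℝ² × ℝ²`. -/
noncomputable def cylCost (x y : ℝ × ℝ) : ℝ :=
  Real.exp (x.1 + y.1) * Real.cos (x.2 - y.2) + Real.exp (2 * x.1) / 2 + Real.exp (2 * y.1) / 2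

/-- Standard basis of `ℝ × ℝ`. -/
def stdBasis2 : Fin 2 → ℝ × ℝ := ![(1, 0), (0, 1)]

/-- The 2×2 matrix of mixed second partials `∂²c/∂xⁱ∂yʲ`. -/
noncomputable def mixedSecond2 (c : ℝ × ℝ → ℝ × ℝ → ℝ) (x y : ℝ × ℝ) :
    Matrix (Fin 2) (Fin 2) ℝ :=
  fun i j => fderiv ℝ (fun x' => fderiv ℝ (fun y' => c x' y') y (stdBasis2 j)) x (stdBasis2 i)

open Real ContinuousLinearMap

noncomputable def yDeriv (x y : ℝ × ℝ) : (ℝ × ℝ) →L[ℝ] ℝ :=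
  (Real.exp (x.1 + y.1) * Real.cos (x.2 - y.2) + Real.exp (2 * y.1)) • fst ℝ ℝ ℝ
    + (Real.exp (x.1 + y.1) * Real.sin (x.2 - y.2)) • snd ℝ ℝ ℝ

lemma hasFDerivAt_cyl_y (x y : ℝ × ℝ) :
    HasFDerivAt (fun y' => cylCost x y') (yDeriv x y) y := by
  have h1 : HasFDerivAt (fun y' : ℝ × ℝ => x.1 + y'.1) (fst ℝ ℝ ℝ) y := by
    exact ((hasFDerivAt_const x.1 y).add
      (hasFDerivAt_fst : HasFDerivAt Prod.fst (fst ℝ ℝ ℝ) y)).congr_fderiv (by simp)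
  have h2 : HasFDerivAt (fun y' : ℝ × ℝ => x.2 - y'.2) (-(snd ℝ ℝ ℝ)) y := by
    exact ((hasFDerivAt_const x.2 y).sub
      (hasFDerivAt_snd : HasFDerivAt Prod.snd (snd ℝ ℝ ℝ) y)).congr_fderiv (by simp)
  have h3 : HasFDerivAt (fun y' : ℝ × ℝ => 2 * y'.1) ((2 : ℝ) • fst ℝ ℝ ℝ) y := by
    simpa using (hasFDerivAt_fst : HasFDerivAt Prod.fst (fst ℝ ℝ ℝ) y).const_mul (2 : ℝ)
  have h4 : HasFDerivAt (fun y' : ℝ × ℝ => Real.exp (2 * y'.1) / 2)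
      (Real.exp (2 * y.1) • fst ℝ ℝ ℝ) y := by
    have H := h3.exp.const_mul (2⁻¹ : ℝ)
    rw [show (fun y' : ℝ × ℝ => Real.exp (2 * y'.1) / 2) =
      fun y' : ℝ × ℝ => 2⁻¹ * Real.exp (2 * y'.1) from funext fun y' => div_eq_inv_mul _ _]
    refine H.congr_fderiv ?_
    refine ContinuousLinearMap.ext fun v => ?_
    simp only [ContinuousLinearMap.smul_apply, ContinuousLinearMap.coe_fst', smul_eq_mul]
    ring
  have H := ((h1.exp.mul h2.cos).add (hasFDerivAt_const (Real.exp (2 * x.1) / 2) y)).add h4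
  simp only [cylCost]
  refine H.congr_fderiv ?_
  refine ContinuousLinearMap.ext fun v => ?_
  simp [yDeriv]
  ring

lemma fderiv_cyl_y (x y : ℝ × ℝ) :
    fderiv ℝ (fun y' => cylCost x y') y = yDeriv x y :=
  (hasFDerivAt_cyl_y x y).fderiv

noncomputable def xDerivA (x y : ℝ × ℝ) : (ℝ × ℝ) →L[ℝ] ℝ :=
  (Real.exp (x.1 + y.1) * Real.cos (x.2 - y.2)) • fst ℝ ℝ ℝ
    + (-(Real.exp (x.1 + y.1) * Real.sin (x.2 - y.2))) • snd ℝ ℝ ℝ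

noncomputable def xDerivB (x y : ℝ × ℝ) : (ℝ × ℝ) →L[ℝ] ℝ :=
  (Real.exp (x.1 + y.1) * Real.sin (x.2 - y.2)) • fst ℝ ℝ ℝ
    + (Real.exp (x.1 + y.1) * Real.cos (x.2 - y.2)) • snd ℝ ℝ ℝ

lemma hx1 (x y : ℝ × ℝ) : HasFDerivAt (fun x' : ℝ × ℝ => x'.1 + y.1) (fst ℝ ℝ ℝ) x := by
  exact ((hasFDerivAt_fst : HasFDerivAt Prod.fst (fst ℝ ℝ ℝ) x).add (hasFDerivAt_const y.1 x)).congr_fderiv (by simp)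

lemma hx2 (x y : ℝ × ℝ) : HasFDerivAt (fun x' : ℝ × ℝ => x'.2 - y.2) (snd ℝ ℝ ℝ) x := by
  exact ((hasFDerivAt_snd : HasFDerivAt Prod.snd (snd ℝ ℝ ℝ) x).sub (hasFDerivAt_const y.2 x)).congr_fderiv (by simp)

lemma hasFDerivAt_A (x y : ℝ × ℝ) :
    HasFDerivAt (fun x' : ℝ × ℝ =>
      Real.exp (x'.1 + y.1) * Real.cos (x'.2 - y.2) + Real.exp (2 * y.1)) (xDerivA x y) x := by
  have H := ((hx1 x y).exp.mul (hx2 x y).cos).add (hasFDerivAt_const (Real.exp (2 * y.1)) x)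
  refine H.congr_fderiv ?_
  refine ContinuousLinearMap.ext fun v => ?_
  simp [xDerivA]
  ring

lemma hasFDerivAt_B (x y : ℝ × ℝ) :
    HasFDerivAt (fun x' : ℝ × ℝ =>
      Real.exp (x'.1 + y.1) * Real.sin (x'.2 - y.2)) (xDerivB x y) x := by
  have H := (hx1 x y).exp.mul (hx2 x y).sin
  refine H.congr_fderiv ?_
  refine ContinuousLinearMap.ext fun v => ?_
  simp [xDerivB]
  ring

lemma mixed_eq (x y : ℝ × ℝ) :
    mixedSecond2 cylCost x y =
      !![Real.exp (x.1 + y.1) * Real.cos (x.2 - y.2), Real.exp (x.1 + y.1) * Real.sin (x.2 - y.2);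
        -(Real.exp (x.1 + y.1) * Real.sin (x.2 - y.2)),
        Real.exp (x.1 + y.1) * Real.cos (x.2 - y.2)] := by
  have hfun0 : (fun x' => fderiv ℝ (fun y' => cylCost x' y') y (((1 : ℝ), (0 : ℝ)))) =
      fun x' : ℝ × ℝ => Real.exp (x'.1 + y.1) * Real.cos (x'.2 - y.2) + Real.exp (2 * y.1) := by
    funext x'
    rw [fderiv_cyl_y]
    simp [yDeriv]
  have hfun1 : (fun x' => fderiv ℝ (fun y' => cylCost x' y') y (((0 : ℝ), (1 : ℝ)))) =
      fun x' : ℝ × ℝ => Real.exp (x'.1 + y.1) * Real.sin (x'.2 - y.2) := by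
    funext x'
    rw [fderiv_cyl_y]
    simp [yDeriv]
  ext i j
  fin_cases i <;> fin_cases j
  · show fderiv ℝ (fun x' => fderiv ℝ (fun y' => cylCost x' y') y (((1 : ℝ), (0 : ℝ)))) x
        (((1 : ℝ), (0 : ℝ))) = Real.exp (x.1 + y.1) * Real.cos (x.2 - y.2)
    rw [hfun0, (hasFDerivAt_A x y).fderiv]
    simp [xDerivA]
  · show fderiv ℝ (fun x' => fderiv ℝ (fun y' => cylCost x' y') y (((0 : ℝ), (1 : ℝ)))) x
        (((1 : ℝ), (0 : ℝ))) = Real.exp (x.1 + y.1) * Real.sin (x.2 - y.2)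
    rw [hfun1, (hasFDerivAt_B x y).fderiv]
    simp [xDerivB]
  · show fderiv ℝ (fun x' => fderiv ℝ (fun y' => cylCost x' y') y (((1 : ℝ), (0 : ℝ)))) x
        (((0 : ℝ), (1 : ℝ))) = -(Real.exp (x.1 + y.1) * Real.sin (x.2 - y.2))
    rw [hfun0, (hasFDerivAt_A x y).fderiv]
    simp [xDerivA]
  · show fderiv ℝ (fun x' => fderiv ℝ (fun y' => cylCost x' y') y (((0 : ℝ), (1 : ℝ)))) x
        (((0 : ℝ), (1 : ℝ))) = Real.exp (x.1 + y.1) * Real.cos (x.2 - y.2)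
    rw [hfun1, (hasFDerivAt_B x y).fderiv]
    simp [xDerivB]

theorem cylCost_nondegenerate_not_twisted :
    (∀ x y : ℝ × ℝ, (mixedSecond2 cylCost x y).det = Real.exp (2 * (x.1 + y.1)) ∧
      0 < (mixedSecond2 cylCost x y).det) ∧
    ∀ x : ℝ × ℝ, ¬ Function.Injective (fun y : ℝ × ℝ => fderiv ℝ (fun x' => cylCost x' y) x) := by
  constructor
  · intro x y
    have hdet : (mixedSecond2 cylCost x y).det = Real.exp (2 * (x.1 + y.1)) := by
      rw [mixed_eq, Matrix.det_fin_two_of]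
      have hs := Real.sin_sq_add_cos_sq (x.2 - y.2)
      have he : Real.exp (x.1 + y.1) * Real.exp (x.1 + y.1) = Real.exp (2 * (x.1 + y.1)) := by
        rw [← Real.exp_add]; ring_nf
      linear_combination (Real.exp (x.1 + y.1) * Real.exp (x.1 + y.1)) * hs + he
    exact ⟨hdet, hdet ▸ Real.exp_pos _⟩
  · intro x hinj
    have key : (fun x' => cylCost x' ((0 : ℝ), (0 : ℝ))) =
        fun x' => cylCost x' ((0 : ℝ), 2 * Real.pi) := by
      funext x'
      simp [cylCost, Real.cos_sub_two_pi]
    have h2 := hinj (a₁ := ((0 : ℝ), (0 : ℝ))) (a₂ := ((0 : ℝ), 2 * Real.pi))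
      (congrArg (fun f => fderiv ℝ f x) key)
    have h3 : (0 : ℝ) = 2 * Real.pi := congrArg Prod.snd h2
    nlinarith [Real.pi_pos]
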